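/- For all positive integers r, n and every 0 ≤ k ≤ n, the number of r-FSchröder paths of size n having exactly k diagonal steps equals the number of r-Schröder paths of size n having exactly k diagonal steps, i.e. equals |Sch_{n, n−k}^r| = (1/((n−k)r+1))·C(n, n−k)·C((n−k)r+n, n); the bijection is given by reflecting paths across the anti-diagonal, which exchanges down steps with right steps and exchanges the diagonal steps (1,−r) and (r,−1). -/

import Mathlib

/-- Steps of an `r`-Schröder path: down `(0,-1)`, right `(1,0)`, diagonal `(r,-1)`. -/
inductive SStep : Type
  | down | right | diag
deriving DecidableEq

/-- Displacement of a step for slope parameter `r`. -/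
def sDisp (r : ℤ) : SStep → ℤ × ℤ
  | .down => (0, -1)
  | .right => (1, 0)
  | .diag => (r, -1)

/-- Position reached after performing the steps `l`, starting at `(0, n)`. -/
def sPos (r n : ℤ) (l : List SStep) : ℤ × ℤ :=
  l.foldl (fun p s => p + sDisp r s) (0, n)

/-- `α` is an `r`-Schröder path of size `n`: it goes from `(0,n)` to `(r*n, 0)` and never
passes strictly above the line segment joining `(0,n)` and `(r*n,0)`
(the segment lies on the line `x + r*y = r*n`). -/
def IsSchroder (r n : ℕ) (α : List SStep) : Prop :=
  sPos r n α = ((r : ℤ) * n, 0) ∧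
  ∀ β, β <+: α → (sPos r n β).1 + (r : ℤ) * (sPos r n β).2 ≤ (r : ℤ) * n

/-- `Sch r n d` : the set of `r`-Schröder paths of size `n` with exactly `n - d`
diagonal steps. -/
def Sch (r n d : ℕ) : Set (List SStep) :=
  {α | IsSchroder r n α ∧ α.count SStep.diag = n - d}

/-- Displacement of a step for an `r`-FSchröder path (unit-fraction slope `1/r`):
down `(0,-1)`, right `(1,0)`, diagonal `(1,-r)`. -/
def fDisp (r : ℤ) : SStep → ℤ × ℤ
  | .down => (0, -1)
  | .right => (1, 0)
  | .diag => (1, -r)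

/-- Position reached after performing the steps `l`, starting at `(0, r*n)`. -/
def fPos (r n : ℤ) (l : List SStep) : ℤ × ℤ :=
  l.foldl (fun p s => p + fDisp r s) (0, r * n)

/-- `α` is an `r`-FSchröder path of size `n`: it goes from `(0, n*r)` to `(n, 0)` and
never passes strictly above the segment joining `(0, n*r)` and `(n, 0)`
(the segment lies on the line `r*x + y = r*n`). -/
def IsFSchroder (r n : ℕ) (α : List SStep) : Prop :=
  fPos r n α = ((n : ℤ), 0) ∧
  ∀ β, β <+: α → (r : ℤ) * (fPos r n β).1 + (fPos r n β).2 ≤ (r : ℤ) * n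

/-- `FSch r n k` : the set of `r`-FSchröder paths of size `n` with exactly `k`
diagonal steps. -/
def FSch (r n k : ℕ) : Set (List SStep) :=
  {α | IsFSchroder r n α ∧ α.count SStep.diag = k}


/-- Reflection across the anti-diagonal on steps: it exchanges down and right steps and
fixes diagonal steps (turning the FSchröder diagonal `(1,-r)` into the Schröder
diagonal `(r,-1)`). The reflected path is `(α.map reflStep).reverse`. -/
def reflStep : SStep → SStep
  | .down => .right
  | .right => .down
  | .diag => .diag


namespace Aux

instance : Fintype SStep where
  elems := {.down, .right, .diag}
  complete := by intro x; cases x <;> decide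

/-! ### Weights and positions -/

def wt (r : ℤ) : SStep → ℤ
  | .down => r
  | .right => -1
  | .diag => 0

def V (r : ℤ) (l : List SStep) : ℤ := (l.map (wt r)).sum

lemma V_append (r : ℤ) (a b : List SStep) : V r (a ++ b) = V r a + V r b := by
  simp [V]

lemma V_eq (r : ℤ) (l : List SStep) :
    V r l = r * l.count .down - l.count .right := by
  induction l with
  | nil => simp [V]
  | cons s t ih =>
    cases s <;> simp [V, wt, List.count_cons] at ih ⊢ <;> push_cast <;> linarith

lemma V_drop (r : ℤ) (l : List SStep) (j : ℕ) :
    V r (l.drop j) = V r l - V r (l.take j) := by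
  have h := congrArg (V r) (List.take_append_drop j l)
  rw [V_append] at h
  linarith

lemma length_eq_counts (l : List SStep) :
    l.length = l.count .down + l.count .right + l.count .diag := by
  induction l with
  | nil => simp
  | cons s t ih =>
    cases s <;> simp [List.count_cons] <;> omega

lemma foldl_gen (f : SStep → ℤ × ℤ) (l : List SStep) (p : ℤ × ℤ) :
    l.foldl (fun p s => p + f s) p = p + (l.map f).sum := by
  induction l generalizing p with
  | nil => simp
  | cons s t ih => simp [ih, add_assoc]

lemma sum_sDisp (r : ℤ) (l : List SStep) :
    (l.map (sDisp r)).sum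
      = ((l.count .right : ℤ) + r * l.count .diag,
         -(l.count .down : ℤ) - l.count .diag) := by
  induction l with
  | nil => simp; rfl
  | cons s t ih =>
    have h1 := congrArg Prod.fst ih
    have h2 := congrArg Prod.snd ih
    refine Prod.ext ?_ ?_ <;> cases s <;>
      simp [sDisp, List.count_cons, Prod.fst_add, Prod.snd_add, h1, h2] <;>
      push_cast <;> ring

lemma sum_fDisp (r : ℤ) (l : List SStep) :
    (l.map (fDisp r)).sum
      = ((l.count .right : ℤ) + l.count .diag,
         -(l.count .down : ℤ) - r * l.count .diag) := by
  induction l with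
  | nil => simp; rfl
  | cons s t ih =>
    have h1 := congrArg Prod.fst ih
    have h2 := congrArg Prod.snd ih
    refine Prod.ext ?_ ?_ <;> cases s <;>
      simp [fDisp, List.count_cons, Prod.fst_add, Prod.snd_add, h1, h2] <;>
      push_cast <;> ring

lemma sPos_eq (r n : ℤ) (l : List SStep) :
    sPos r n l = ((l.count .right : ℤ) + r * l.count .diag,
                  n - l.count .down - l.count .diag) := by
  rw [sPos, foldl_gen, sum_sDisp]
  simp [Prod.ext_iff]; ring

lemma fPos_eq (r n : ℤ) (l : List SStep) :
    fPos r n l = ((l.count .right : ℤ) + l.count .diag,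
                  r * n - l.count .down - r * l.count .diag) := by
  rw [fPos, foldl_gen, sum_fDisp]
  simp [Prod.ext_iff]; ring

/-! ### Characterizations of Schröder and FSchröder paths -/

lemma isSchroder_iff (r n : ℕ) (α : List SStep) :
    IsSchroder r n α ↔
      (α.count .down + α.count .diag = n ∧
       α.count .right + r * α.count .diag = r * n ∧
       ∀ β, β <+: α → 0 ≤ V r β) := by
  have hpt : ∀ β : List SStep,
      ((sPos r n β).1 + (r : ℤ) * (sPos r n β).2 ≤ (r : ℤ) * n ↔ 0 ≤ V (r : ℤ) β) := by
    intro β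
    rw [sPos_eq, V_eq]
    dsimp only
    constructor <;> intro h <;> nlinarith [h]
  constructor
  · rintro ⟨hend, hpre⟩
    rw [sPos_eq, Prod.mk.injEq] at hend
    obtain ⟨h1, h2⟩ := hend
    refine ⟨?_, by exact_mod_cast h1, fun β hβ => (hpt β).mp (hpre β hβ)⟩
    have : (α.count .down : ℤ) + α.count .diag = n := by linarith
    exact_mod_cast this
  · rintro ⟨h1, h2, h3⟩
    refine ⟨?_, fun β hβ => (hpt β).mpr (h3 β hβ)⟩
    rw [sPos_eq, Prod.mk.injEq]
    have h1' : (α.count .down : ℤ) + α.count .diag = n := by exact_mod_cast h1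
    exact ⟨by exact_mod_cast h2, by linarith⟩

lemma isFSchroder_iff (r n : ℕ) (α : List SStep) :
    IsFSchroder r n α ↔
      (α.count .right + α.count .diag = n ∧
       α.count .down + r * α.count .diag = r * n ∧
       ∀ β, β <+: α →
         0 ≤ (β.count SStep.down : ℤ) - r * β.count SStep.right) := by
  have hpt : ∀ β : List SStep,
      ((r : ℤ) * (fPos r n β).1 + (fPos r n β).2 ≤ (r : ℤ) * n ↔
        0 ≤ (β.count SStep.down : ℤ) - r * β.count SStep.right) := by
    intro β
    rw [fPos_eq]
    dsimp only
    constructor <;> intro h <;> nlinarith [h]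
  constructor
  · rintro ⟨hend, hpre⟩
    rw [fPos_eq, Prod.mk.injEq] at hend
    obtain ⟨h1, h2⟩ := hend
    refine ⟨by exact_mod_cast h1, ?_, fun β hβ => (hpt β).mp (hpre β hβ)⟩
    have : (α.count .down : ℤ) + r * α.count .diag = r * n := by linarith
    exact_mod_cast this
  · rintro ⟨h1, h2, h3⟩
    refine ⟨?_, fun β hβ => (hpt β).mpr (h3 β hβ)⟩
    rw [fPos_eq, Prod.mk.injEq]
    have h2' : (α.count .down : ℤ) + r * α.count .diag = r * n := by exact_mod_cast h2
    exact ⟨by exact_mod_cast h1, by linarith⟩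

lemma mem_Sch_iff (r n k : ℕ) (hk : k ≤ n) (α : List SStep) :
    α ∈ Sch r n (n - k) ↔
      (α.count .down = n - k ∧ α.count .right = r * (n - k) ∧
       α.count .diag = k ∧ ∀ β, β <+: α → 0 ≤ V r β) := by
  have hmul : r * (n - k) + r * k = r * n := by
    rw [← Nat.mul_add]; congr 1; omega
  rw [Sch, Set.mem_setOf_eq, isSchroder_iff]
  constructor
  · rintro ⟨⟨h1, h2, h3⟩, h4⟩
    have hK : α.count SStep.diag = k := by omega
    rw [hK] at h2
    exact ⟨by omega, by omega, hK, h3⟩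
  · rintro ⟨h1, h2, h3, h4⟩
    refine ⟨⟨by omega, ?_, h4⟩, by omega⟩
    rw [h3, h2]
    omega

lemma mem_FSch_iff (r n k : ℕ) (α : List SStep) :
    α ∈ FSch r n k ↔
      (α.count .right = n - k ∧ α.count .down = r * (n - k) ∧
       α.count .diag = k ∧ k ≤ n ∧
       ∀ β, β <+: α →
         0 ≤ (β.count SStep.down : ℤ) - r * β.count SStep.right) := by
  rw [FSch, Set.mem_setOf_eq, isFSchroder_iff]
  constructor
  · rintro ⟨⟨h1, h2, h3⟩, h4⟩
    have hk : k ≤ n := by omega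
    have hmul : r * (n - k) + r * k = r * n := by
      rw [← Nat.mul_add]; congr 1; omega
    rw [h4] at h2
    exact ⟨by omega, by omega, h4, hk, h3⟩
  · rintro ⟨h1, h2, h3, hk, h4⟩
    have hmul : r * (n - k) + r * k = r * n := by
      rw [← Nat.mul_add]; congr 1; omega
    refine ⟨⟨by omega, ?_, h4⟩, h3⟩
    rw [h3, h2]
    omega

/-! ### The reflection bijection -/

lemma reflStep_invol (s : SStep) : reflStep (reflStep s) = s := by
  cases s <;> rfl

lemma reflStep_inj : Function.Injective reflStep :=
  Function.LeftInverse.injective reflStep_invol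

lemma refl_refl (l : List SStep) : ((l.map reflStep).reverse.map reflStep).reverse = l := by
  rw [← List.map_reverse, List.reverse_reverse, List.map_map]
  have : reflStep ∘ reflStep = id := funext reflStep_invol
  rw [this, List.map_id]

lemma count_refl (l : List SStep) (s : SStep) :
    (l.map reflStep).reverse.count s = l.count (reflStep s) := by
  rw [List.count_reverse]
  conv_lhs => rw [← reflStep_invol s]
  exact List.count_map_of_injective l reflStep reflStep_inj (reflStep s)

lemma prefix_refl {β α : List SStep} (h : β <+: (α.map reflStep).reverse) :
    ∃ γ δ : List SStep, δ ++ γ = α ∧ β = (γ.map reflStep).reverse := by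
  obtain ⟨t, ht⟩ := h
  refine ⟨(β.reverse.map reflStep), (t.reverse.map reflStep), ?_, ?_⟩
  · have : α.map reflStep = t.reverse ++ β.reverse := by
      have := congrArg List.reverse ht
      rw [List.reverse_append, List.reverse_reverse] at this
      exact this.symm
    have h2 := congrArg (List.map reflStep) this
    rw [List.map_map] at h2
    have hid : reflStep ∘ reflStep = id := funext reflStep_invol
    rw [hid, List.map_id, List.map_append] at h2
    exact h2.symm
  · rw [List.map_map]
    have hid : reflStep ∘ reflStep = id := funext reflStep_invol
    rw [hid, List.map_id, List.reverse_reverse]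

lemma mapsTo_FSch_Sch (r n k : ℕ) (hk : k ≤ n) :
    Set.MapsTo (fun α => (α.map reflStep).reverse) (FSch r n k) (Sch r n (n - k)) := by
  intro α hα
  rw [mem_FSch_iff] at hα
  obtain ⟨hR, hD, hK, -, hpre⟩ := hα
  rw [mem_Sch_iff r n k hk]
  refine ⟨by rw [count_refl]; exact hR, by rw [count_refl]; exact hD,
    by rw [count_refl]; exact hK, ?_⟩
  obtain ⟨m, hm⟩ : ∃ m, n - k = m := ⟨_, rfl⟩
  rw [hm] at hR hD
  intro β hβ
  obtain ⟨γ, δ, hδγ, rfl⟩ := prefix_refl hβ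
  rw [V_eq, count_refl, count_refl]
  show (0:ℤ) ≤ r * γ.count SStep.right - γ.count SStep.down
  have h1 := hpre δ ⟨γ, hδγ⟩
  have hcD : δ.count SStep.down + γ.count SStep.down = r * m := by
    rw [← hD, ← hδγ, List.count_append]
  have hcR : δ.count SStep.right + γ.count SStep.right = m := by
    rw [← hR, ← hδγ, List.count_append]
  have hcD' : (δ.count SStep.down : ℤ) + γ.count SStep.down = (r : ℤ) * m := by
    exact_mod_cast hcD
  have hcR' : (δ.count SStep.right : ℤ) + γ.count SStep.right = (m : ℤ) := by
    exact_mod_cast hcR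
  have hmul : (r : ℤ) * δ.count SStep.right + r * γ.count SStep.right
      = (r : ℤ) * m := by rw [← mul_add, hcR']
  linarith

lemma mapsTo_Sch_FSch (r n k : ℕ) (hk : k ≤ n) :
    Set.MapsTo (fun α => (α.map reflStep).reverse) (Sch r n (n - k)) (FSch r n k) := by
  intro α hα
  rw [mem_Sch_iff r n k hk] at hα
  obtain ⟨hD, hR, hK, hpre⟩ := hα
  rw [mem_FSch_iff]
  refine ⟨by rw [count_refl]; exact hD, by rw [count_refl]; exact hR,
    by rw [count_refl]; exact hK, hk, ?_⟩
  obtain ⟨m, hm⟩ : ∃ m, n - k = m := ⟨_, rfl⟩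
  rw [hm] at hR hD
  intro β hβ
  obtain ⟨γ, δ, hδγ, rfl⟩ := prefix_refl hβ
  rw [count_refl, count_refl]
  show (0:ℤ) ≤ γ.count SStep.right - r * γ.count SStep.down
  have h1 := hpre δ ⟨γ, hδγ⟩
  rw [V_eq] at h1
  have hcD : δ.count SStep.down + γ.count SStep.down = m := by
    rw [← hD, ← hδγ, List.count_append]
  have hcR : δ.count SStep.right + γ.count SStep.right = r * m := by
    rw [← hR, ← hδγ, List.count_append]
  have hcD' : (δ.count SStep.down : ℤ) + γ.count SStep.down = (m : ℤ) := by
    exact_mod_cast hcD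
  have hcR' : (δ.count SStep.right : ℤ) + γ.count SStep.right = (r : ℤ) * m := by
    exact_mod_cast hcR
  have hmul : (r : ℤ) * δ.count SStep.down + r * γ.count SStep.down
      = (r : ℤ) * m := by rw [← mul_add, hcD']
  linarith

lemma refl_bijOn (r n k : ℕ) (hk : k ≤ n) :
    Set.BijOn (fun α => (α.map reflStep).reverse) (FSch r n k) (Sch r n (n - k)) := by
  have hinv : Set.InvOn (fun α : List SStep => (α.map reflStep).reverse)
      (fun α => (α.map reflStep).reverse) (FSch r n k) (Sch r n (n - k)) :=
    ⟨fun x _ => refl_refl x, fun x _ => refl_refl x⟩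
  exact hinv.bijOn (mapsTo_FSch_Sch r n k hk) (mapsTo_Sch_FSch r n k hk)


/-! ### Counting words with prescribed letter multiplicities -/

def Wset (a b c : ℕ) : Set (List SStep) :=
  {l | l.count .down = a ∧ l.count .right = b ∧ l.count .diag = c}

lemma Wset_finite (a b c : ℕ) : (Wset a b c).Finite := by
  refine (List.finite_length_eq SStep (a + b + c)).subset ?_
  intro l hl
  obtain ⟨h1, h2, h3⟩ := hl
  simp only [Set.mem_setOf_eq]
  rw [length_eq_counts, h1, h2, h3]

lemma cons_injective (s : SStep) : Function.Injective (fun t : List SStep => s :: t) := by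
  intro x y h
  simpa using congrArg List.tail h

lemma ncard_three_cons (S1 S2 S3 : Set (List SStep))
    (h1 : S1.Finite) (h2 : S2.Finite) (h3 : S3.Finite) :
    ((SStep.down :: ·) '' S1 ∪ (SStep.right :: ·) '' S2 ∪ (SStep.diag :: ·) '' S3).ncard
      = S1.ncard + S2.ncard + S3.ncard := by
  have d12 : Disjoint ((SStep.down :: ·) '' S1) ((SStep.right :: ·) '' S2) := by
    rw [Set.disjoint_left]
    rintro x ⟨t, _, rfl⟩ ⟨u, _, hx⟩
    simp at hx
  have d13 : Disjoint ((SStep.down :: ·) '' S1 ∪ (SStep.right :: ·) '' S2)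
      ((SStep.diag :: ·) '' S3) := by
    rw [Set.disjoint_left]
    rintro x (⟨t, _, rfl⟩ | ⟨t, _, rfl⟩) ⟨u, _, hx⟩ <;> simp at hx
  rw [Set.ncard_union_eq d13 ((h1.image _).union (h2.image _)) (h3.image _),
    Set.ncard_union_eq d12 (h1.image _) (h2.image _),
    Set.ncard_image_of_injective _ (cons_injective _),
    Set.ncard_image_of_injective _ (cons_injective _),
    Set.ncard_image_of_injective _ (cons_injective _)]

lemma Wset_decomp (a b c : ℕ) (h : 0 < a + b + c) :
    Wset a b c
      = (SStep.down :: ·) '' {t | t.count .down + 1 = a ∧ t.count .right = b ∧ t.count .diag = c}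
      ∪ (SStep.right :: ·) '' {t | t.count .down = a ∧ t.count .right + 1 = b ∧ t.count .diag = c}
      ∪ (SStep.diag :: ·) '' {t | t.count .down = a ∧ t.count .right = b ∧ t.count .diag + 1 = c} := by
  ext l
  constructor
  · intro hl
    obtain ⟨h1, h2, h3⟩ := hl
    cases l with
    | nil => simp at h1 h2 h3; omega
    | cons s t =>
      cases s
      · exact Or.inl (Or.inl ⟨t, by
          constructor
          · simp [List.count_cons] at h1 h2 h3 ⊢; omega
          · rfl⟩)
      · exact Or.inl (Or.inr ⟨t, by
          constructor
          · simp [List.count_cons] at h1 h2 h3 ⊢; omega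
          · rfl⟩)
      · exact Or.inr ⟨t, by
          constructor
          · simp [List.count_cons] at h1 h2 h3 ⊢; omega
          · rfl⟩
  · rintro ((⟨t, ht, rfl⟩ | ⟨t, ht, rfl⟩) | ⟨t, ht, rfl⟩) <;>
      obtain ⟨h1, h2, h3⟩ := ht <;>
      refine ⟨?_, ?_, ?_⟩ <;> simp [List.count_cons] <;> omega

lemma setd_succ (a b c : ℕ) :
    {t : List SStep | t.count .down + 1 = a + 1 ∧ t.count .right = b ∧ t.count .diag = c}
      = Wset a b c := by
  ext t; simp [Wset]
lemma setd_zero (b c : ℕ) :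
    {t : List SStep | t.count .down + 1 = 0 ∧ t.count .right = b ∧ t.count .diag = c}
      = ∅ := by
  ext t; simp
lemma setr_succ (a b c : ℕ) :
    {t : List SStep | t.count .down = a ∧ t.count .right + 1 = b + 1 ∧ t.count .diag = c}
      = Wset a b c := by
  ext t; simp [Wset]
lemma setr_zero (a c : ℕ) :
    {t : List SStep | t.count .down = a ∧ t.count .right + 1 = 0 ∧ t.count .diag = c}
      = ∅ := by
  ext t; simp
lemma setg_succ (a b c : ℕ) :
    {t : List SStep | t.count .down = a ∧ t.count .right = b ∧ t.count .diag + 1 = c + 1}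
      = Wset a b c := by
  ext t; simp [Wset]
lemma setg_zero (a b : ℕ) :
    {t : List SStep | t.count .down = a ∧ t.count .right = b ∧ t.count .diag + 1 = 0}
      = ∅ := by
  ext t; simp

lemma card_words : ∀ (m a b c : ℕ), a + b + c = m →
    (Wset a b c).ncard = m.choose a * (b + c).choose b := by
  intro m
  induction m with
  | zero =>
    intro a b c h
    have ha : a = 0 := by omega
    have hb : b = 0 := by omega
    have hc : c = 0 := by omega
    subst ha; subst hb; subst hc
    have : Wset 0 0 0 = {([] : List SStep)} := by
      ext l
      constructor
      · rintro ⟨h1, h2, h3⟩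
        have := length_eq_counts l
        rw [h1, h2, h3] at this
        simpa using List.length_eq_zero_iff.mp (by omega)
      · rintro rfl
        exact ⟨rfl, rfl, rfl⟩
    rw [this]
    simp
  | succ M ih =>
    intro a b c hsum
    rw [Wset_decomp a b c (by omega)]
    rcases a with _ | a <;> rcases b with _ | b <;> rcases c with _ | c
    · omega
    · -- (0, 0, c+1)
      rw [setd_zero, setr_zero, setg_succ,
        ncard_three_cons _ _ _ Set.finite_empty Set.finite_empty (Wset_finite _ _ _)]
      rw [ih 0 0 c (by omega)]
      simp
    · -- (0, b+1, 0)
      rw [setd_zero, setg_zero, setr_succ,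
        ncard_three_cons _ _ _ Set.finite_empty (Wset_finite _ _ _) Set.finite_empty]
      rw [ih 0 b 0 (by omega)]
      simp
    · -- (0, b+1, c+1)
      rw [setd_zero, setr_succ, setg_succ,
        ncard_three_cons _ _ _ Set.finite_empty (Wset_finite _ _ _) (Wset_finite _ _ _)]
      rw [ih 0 b (c+1) (by omega), ih 0 (b+1) c (by omega)]
      simp only [Nat.choose_zero_right, Set.ncard_empty, one_mul, zero_add]
      have e1 : b + (c + 1) = (b + c) + 1 := by omega
      have e2 : b + 1 + c = (b + c) + 1 := by omega
      have e3 : b + 1 + (c + 1) = (b + c + 1) + 1 := by omega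
      rw [e1, e2, e3, Nat.choose_succ_succ (b + c + 1) b]
    · -- (a+1, 0, 0)
      rw [setr_zero, setg_zero, setd_succ,
        ncard_three_cons _ _ _ (Wset_finite _ _ _) Set.finite_empty Set.finite_empty]
      rw [ih a 0 0 (by omega)]
      have hM : M = a := by omega
      subst hM
      simp
    · -- (a+1, 0, c+1)
      rw [setr_zero, setd_succ, setg_succ,
        ncard_three_cons _ _ _ (Wset_finite _ _ _) Set.finite_empty (Wset_finite _ _ _)]
      rw [ih a 0 (c+1) (by omega), ih (a+1) 0 c (by omega)]
      simp only [Nat.choose_zero_right, Set.ncard_empty, mul_one, add_zero, zero_add]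
      rw [Nat.choose_succ_succ M a]
    · -- (a+1, b+1, 0)
      rw [setg_zero, setd_succ, setr_succ,
        ncard_three_cons _ _ _ (Wset_finite _ _ _) (Wset_finite _ _ _) Set.finite_empty]
      rw [ih a (b+1) 0 (by omega), ih (a+1) b 0 (by omega)]
      simp only [Nat.choose_self, Set.ncard_empty, mul_one, add_zero, Nat.add_zero]
      rw [Nat.choose_succ_succ M a]
    · -- (a+1, b+1, c+1)
      rw [setd_succ, setr_succ, setg_succ,
        ncard_three_cons _ _ _ (Wset_finite _ _ _) (Wset_finite _ _ _) (Wset_finite _ _ _)]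
      rw [ih a (b+1) (c+1) (by omega), ih (a+1) b (c+1) (by omega), ih (a+1) (b+1) c (by omega)]
      have e1 : b + 1 + (c + 1) = (b + c + 1) + 1 := by omega
      have e2 : b + (c + 1) = (b + c) + 1 := by omega
      have e3 : b + 1 + c = (b + c) + 1 := by omega
      rw [e1, e2, e3, Nat.choose_succ_succ M a, Nat.choose_succ_succ (b + c + 1) b]
      ring


/-! ### The cycle lemma -/

def Gd (r d k : ℕ) : Set (List SStep) :=
  {l | l.count .down = d ∧ l.count .right = r * d + 1 ∧ l.count .diag = k ∧
       ∀ m, m < l.length → 0 ≤ V r (l.take m)}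

lemma Gd_subset_T (r d k : ℕ) : Gd r d k ⊆ Wset d (r * d + 1) k :=
  fun _ hl => ⟨hl.1, hl.2.1, hl.2.2.1⟩

lemma T_length (r d k : ℕ) {l : List SStep} (hl : l ∈ Wset d (r * d + 1) k) :
    l.length = d + (r * d + 1) + k := by
  rw [length_eq_counts, hl.1, hl.2.1, hl.2.2]

lemma T_V (r d k : ℕ) {l : List SStep} (hl : l ∈ Wset d (r * d + 1) k) :
    V r l = -1 := by
  rw [V_eq, hl.1, hl.2.1]
  push_cast
  ring

lemma T_rotate (r d k : ℕ) {l : List SStep} (hl : l ∈ Wset d (r * d + 1) k) (i : ℕ) :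
    l.rotate i ∈ Wset d (r * d + 1) k := by
  refine ⟨?_, ?_, ?_⟩ <;>
    rw [(List.rotate_perm l i).count_eq]
  · exact hl.1
  · exact hl.2.1
  · exact hl.2.2

lemma rot_good_eq_zero (r d k : ℕ) {g : List SStep} {j : ℕ}
    (hg : g ∈ Gd r d k) (hrot : g.rotate j ∈ Gd r d k)
    (hj : j < d + (r * d + 1) + k) : j = 0 := by
  by_contra hj0
  set N := d + (r * d + 1) + k with hN
  have hlen : g.length = N := T_length r d k (Gd_subset_T r d k hg)
  have hVg : V r g = -1 := T_V r d k (Gd_subset_T r d k hg)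
  have htj : 0 ≤ V r (g.take j) := hg.2.2.2 j (by omega)
  have e : (g.rotate j).take (N - j) = g.drop j := by
    rw [List.rotate_eq_drop_append_take (by omega : j ≤ g.length)]
    have h' : N - j = (g.drop j).length := by
      rw [List.length_drop, hlen]
    rw [h', List.take_left]
  have hcond := hrot.2.2.2 (N - j) (by rw [List.length_rotate, hlen]; omega)
  rw [e, V_drop, hVg] at hcond
  linarith

lemma exists_good_rot (r d k : ℕ) {l : List SStep} (hl : l ∈ Wset d (r * d + 1) k) :
    ∃ i, i < d + (r * d + 1) + k ∧ l.rotate i ∈ Gd r d k := by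
  classical
  set N := d + (r * d + 1) + k with hN
  have hN0 : 0 < N := by omega
  have hlen : l.length = N := T_length r d k hl
  have hPN : ∀ m, N ≤ m → V r (l.take m) = -1 := by
    intro m hm
    have h' : l.take m = l := List.take_of_length_le (by omega)
    rw [h']
    exact T_V r d k hl
  obtain ⟨i0, hi0mem, hi0min⟩ :=
    (Finset.range (N + 1)).exists_min_image (fun m => V r (l.take m)) ⟨0, by simp⟩
  have hi0le : i0 ≤ N := by
    have := Finset.mem_range.mp hi0mem
    omega
  have hex : ∃ m, m ≤ N ∧ ∀ j, j ≤ N → V r (l.take m) ≤ V r (l.take j) :=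
    ⟨i0, hi0le, fun j hj => hi0min j (Finset.mem_range.mpr (by omega))⟩
  have hfind := Nat.find_spec hex
  have hfmin := fun t (ht : t < Nat.find hex) => Nat.find_min hex ht
  obtain ⟨i, hieq⟩ : ∃ i, Nat.find hex = i := ⟨_, rfl⟩
  rw [hieq] at hfind hfmin
  obtain ⟨hiN, hdown⟩ := hfind
  have hfirst : ∀ t, t < i → V r (l.take i) + 1 ≤ V r (l.take t) := by
    intro t ht
    have h1 := hfmin t ht
    have htN : t ≤ N := le_trans (le_of_lt ht) hiN
    push_neg at h1
    obtain ⟨j, hjN, hjlt⟩ := h1 htN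
    have h2 := hdown j hjN
    omega
  by_cases hiN' : i = N
  · refine ⟨0, hN0, ?_⟩
    rw [List.rotate_zero]
    refine ⟨hl.1, hl.2.1, hl.2.2, fun m hm => ?_⟩
    have h1 : V r (l.take i) = -1 := by rw [hiN']; exact hPN N le_rfl
    have h2 := hfirst m (by omega)
    omega
  · have hiltN : i < N := lt_of_le_of_ne hiN hiN'
    refine ⟨i, hiltN, T_rotate r d k hl i |>.1, (T_rotate r d k hl i).2.1,
      (T_rotate r d k hl i).2.2, ?_⟩
    intro m hm
    rw [List.length_rotate, hlen] at hm
    have hrot : l.rotate i = l.drop i ++ l.take i :=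
      List.rotate_eq_drop_append_take (by omega)
    have hdlen : (l.drop i).length = N - i := by rw [List.length_drop, hlen]
    have htake : (l.rotate i).take m
        = (l.drop i).take m ++ (l.take i).take (m - (N - i)) := by
      rw [hrot, List.take_append, hdlen]
    have hVdt : V r ((l.drop i).take m) = V r (l.take (i + m)) - V r (l.take i) := by
      have h' := congrArg (V r) (List.take_add (l := l) (i := i) (j := m))
      rw [V_append] at h'
      omega
    by_cases hcase : m ≤ N - i
    · rw [htake]
      have h0 : m - (N - i) = 0 := by omega
      rw [h0, List.take_zero, List.append_nil, hVdt]
      have h2 := hdown (i + m) (by omega)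
      omega
    · have ht1 : m - (N - i) < i := by omega
      have htt : (l.take i).take (m - (N - i)) = l.take (m - (N - i)) := by
        rw [List.take_take]
        congr 1
        omega
      rw [htake, htt, V_append, hVdt]
      have h2 : V r (l.take (i + m)) = -1 := hPN (i + m) (by omega)
      have h3 := hfirst (m - (N - i)) ht1
      omega

lemma card_T_eq (r d k : ℕ) :
    (Wset d (r * d + 1) k).ncard = (d + (r * d + 1) + k) * (Gd r d k).ncard := by
  classical
  obtain ⟨N, hN⟩ : ∃ N, N = d + (r * d + 1) + k := ⟨_, rfl⟩
  rw [← hN]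
  have hN0 : 0 < N := by omega
  let Φ : (Gd r d k) × Fin N → (Wset d (r * d + 1) k) :=
    fun p => ⟨p.1.1.rotate p.2.1, T_rotate r d k (Gd_subset_T r d k p.1.2) p.2.1⟩
  have key : ∀ (a b : List SStep) (ia ib : ℕ), a.length = N → b.length = N →
      ia < N → ib < N → a.rotate ia = b.rotate ib →
      b = a.rotate ((ia + (N - ib)) % N) := by
    intro a b ia ib ha hb hia hib hab
    have h1 : (b.rotate ib).rotate (N - ib) = b := by
      rw [List.rotate_rotate]
      have h' : ib + (N - ib) = N := by omega
      rw [h', ← hb, List.rotate_length]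
    have h2 : (a.rotate ia).rotate (N - ib) = a.rotate (ia + (N - ib)) :=
      List.rotate_rotate a ia (N - ib)
    rw [← h1, ← hab, h2, ← ha]
    exact (List.rotate_mod _ _).symm
  have modzero : ∀ ia ib : ℕ, ia < N → ib < N → (ia + (N - ib)) % N = 0 → ia = ib := by
    intro ia ib hia hib hz
    obtain ⟨c, hc⟩ := Nat.dvd_of_mod_eq_zero hz
    have hc2 : c < 2 := by
      rcases Nat.lt_or_ge c 2 with h | h
      · exact h
      · exfalso
        have h3 : N * 2 ≤ N * c := Nat.mul_le_mul_left N h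
        omega
    interval_cases c <;> omega
  have hinj : Function.Injective Φ := by
    rintro ⟨⟨g1, hg1⟩, i1⟩ ⟨⟨g2, hg2⟩, i2⟩ h
    have h' : g1.rotate i1 = g2.rotate i2 := congrArg Subtype.val h
    have hlen1 : g1.length = N := by rw [T_length r d k (Gd_subset_T r d k hg1), hN]
    have hlen2 : g2.length = N := by rw [T_length r d k (Gd_subset_T r d k hg2), hN]
    have hi1 : (i1 : ℕ) < N := i1.2
    have hi2 : (i2 : ℕ) < N := i2.2
    have hg2rot := key g1 g2 i1 i2 hlen1 hlen2 hi1 hi2 h'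
    have hmod1 : (↑i1 + (N - ↑i2)) % N < N := Nat.mod_lt _ hN0
    have hz1 : (↑i1 + (N - ↑i2)) % N = 0 := by
      refine rot_good_eq_zero r d k hg1 ?_ (by omega)
      rw [← hg2rot]; exact hg2
    have hg12 : g2 = g1 := by
      rw [hg2rot, hz1, List.rotate_zero]
    subst hg12
    have hg1rot := key g2 g2 i1 i2 hlen1 hlen1 hi1 hi2 h'
    have hz2 : (↑i1 + (N - ↑i2)) % N = 0 := by
      refine rot_good_eq_zero r d k hg1 ?_ (by omega)
      rw [← hg1rot]; exact hg1
    have hii : (i1 : ℕ) = i2 := modzero i1 i2 hi1 hi2 hz2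
    simp [Prod.ext_iff, Fin.ext_iff, hii]
  have hsurj : Function.Surjective Φ := by
    rintro ⟨l, hl⟩
    obtain ⟨i, hiN, hgood⟩ := exists_good_rot r d k hl
    rw [← hN] at hiN
    have hlen : l.length = N := by rw [T_length r d k hl, hN]
    refine ⟨⟨⟨l.rotate i, hgood⟩, ⟨(N - i) % N, Nat.mod_lt _ hN0⟩⟩, ?_⟩
    apply Subtype.ext
    show (l.rotate i).rotate ((N - i) % N) = l
    have hlenrot : (l.rotate i).length = N := by rw [List.length_rotate, hlen]
    rw [← hlenrot, List.rotate_mod, hlenrot, List.rotate_rotate]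
    have h' : i + (N - i) = N := by omega
    rw [h', ← hlen, List.rotate_length]
  have hcard := Nat.card_eq_of_bijective Φ ⟨hinj, hsurj⟩
  rw [Nat.card_prod, Nat.card_eq_fintype_card (α := Fin N), Fintype.card_fin,
    Nat.card_coe_set_eq, Nat.card_coe_set_eq] at hcard
  rw [← hcard, mul_comm]

/-! ### Appending a right step: Sch ≃ G -/

lemma mem_Gd_last (r d k : ℕ) (hr : 1 ≤ r) {l : List SStep} (hl : l ∈ Gd r d k) :
    l.dropLast ++ [SStep.right] = l := by
  obtain ⟨h1, h2, h3, h4⟩ := hl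
  have hlen : l.length = d + (r * d + 1) + k := by
    rw [length_eq_counts, h1, h2, h3]
  have hne : l ≠ [] := by
    intro h
    rw [h] at hlen
    simp at hlen
    omega
  have hsplit := List.dropLast_append_getLast hne
  have hVl : V r l = -1 := T_V r d k ⟨h1, h2, h3⟩
  have hVdl : 0 ≤ V r l.dropLast := by
    have := h4 (l.length - 1) (by omega)
    rwa [← List.dropLast_eq_take] at this
  have hVsum : V r l = V r l.dropLast + wt r (l.getLast hne) := by
    conv_lhs => rw [← hsplit]
    rw [V_append]
    simp [V]
  have hlast : l.getLast hne = SStep.right := by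
    have hr' : (1 : ℤ) ≤ (r : ℤ) := by exact_mod_cast hr
    rcases hgl : l.getLast hne with _ | _ | _ <;> rw [hgl] at hVsum <;>
      simp [wt] at hVsum <;> try linarith
  rw [← hlast]
  exact hsplit

lemma bijOn_Sch_Gd (r n k : ℕ) (hr : 1 ≤ r) (hk : k ≤ n) :
    Set.BijOn (fun α => α ++ [SStep.right]) (Sch r n (n - k)) (Gd r (n - k) k) := by
  have hmapsTo : Set.MapsTo (fun α => α ++ [SStep.right]) (Sch r n (n - k))
      (Gd r (n - k) k) := by
    intro α hα
    rw [mem_Sch_iff r n k hk] at hα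
    obtain ⟨h1, h2, h3, h4⟩ := hα
    refine ⟨?_, ?_, ?_, ?_⟩
    · simp [List.count_append, h1]
    · simp [List.count_append, h2, mul_comm]
    · simp [List.count_append, h3]
    · intro m hm
      rw [List.length_append, List.length_singleton] at hm
      have hmle : m ≤ α.length := by omega
      rw [List.take_append_of_le_length hmle]
      exact h4 (α.take m) (List.take_prefix m α)
  have hback : Set.MapsTo List.dropLast (Gd r (n - k) k) (Sch r n (n - k)) := by
    intro l hl
    have hsplit := mem_Gd_last r (n - k) k hr hl
    obtain ⟨h1, h2, h3, h4⟩ := hl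
    rw [mem_Sch_iff r n k hk]
    have hc1 : l.dropLast.count SStep.down = n - k := by
      rw [← h1]
      conv_rhs => rw [← hsplit]
      simp [List.count_append]
    have hc2 : l.dropLast.count SStep.right = r * (n - k) := by
      have : l.dropLast.count SStep.right + 1 = r * (n - k) + 1 := by
        rw [← h2]
        conv_rhs => rw [← hsplit]
        simp [List.count_append, mul_comm]
      omega
    have hc3 : l.dropLast.count SStep.diag = k := by
      rw [← h3]
      conv_rhs => rw [← hsplit]
      simp [List.count_append]
    refine ⟨hc1, hc2, hc3, ?_⟩
    intro β hβ
    have hdp : l.dropLast <+: l := ⟨[SStep.right], hsplit⟩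
    have hβl : β <+: l := hβ.trans hdp
    have hβlen : β.length ≤ l.dropLast.length := hβ.length_le
    have hlast : β.length < l.length := by
      rw [List.length_dropLast] at hβlen
      have : l ≠ [] := by
        intro h
        rw [h] at hsplit
        simp at hsplit
      have : 0 < l.length := List.length_pos_iff.mpr this
      omega
    have := h4 β.length hlast
    rwa [← List.prefix_iff_eq_take.mp hβl] at this
  have hinv : Set.InvOn List.dropLast (fun α => α ++ [SStep.right])
      (Sch r n (n - k)) (Gd r (n - k) k) := by
    constructor
    · intro α _
      exact List.dropLast_concat
    · intro l hl
      exact mem_Gd_last r (n - k) k hr hl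
  exact hinv.bijOn hmapsTo hback

/-! ### Arithmetic -/

lemma key_arith (r d k : ℕ) :
    (r * d + 1) * ((d + (r * d + 1) + k).choose d * ((r * d + 1) + k).choose (r * d + 1))
      = (d + (r * d + 1) + k) * ((d + k).choose d * (r * d + (d + k)).choose (d + k)) := by
  have h1 : d ≤ d + (r * d + 1) + k := by omega
  have h2 : r * d + 1 ≤ (r * d + 1) + k := by omega
  have h3 : d ≤ d + k := by omega
  have h4 : d + k ≤ r * d + (d + k) := by omega
  have e1 : d + (r * d + 1) + k - d = r * d + 1 + k := by omega
  have e2 : (r * d + 1) + k - (r * d + 1) = k := by omega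
  have e3 : d + k - d = k := by omega
  have e4 : r * d + (d + k) - (d + k) = r * d := by omega
  have eN : d + (r * d + 1) + k = (r * d + (d + k)) + 1 := by omega
  apply @Nat.cast_injective ℚ _ _
  push_cast [Nat.cast_choose ℚ h1, Nat.cast_choose ℚ h2, Nat.cast_choose ℚ h3,
    Nat.cast_choose ℚ h4, e1, e2, e3, e4]
  rw [eN]
  have hfact : ∀ m : ℕ, ((m.factorial : ℚ)) ≠ 0 := by
    intro m
    exact_mod_cast (Nat.factorial_ne_zero m)
  rw [Nat.factorial_succ (r * d + (d + k))]
  rw [show r * d + 1 + k = (r * d + k) + 1 by omega]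
  rw [Nat.factorial_succ (r * d + k)]
  rw [Nat.factorial_succ (r * d)]
  push_cast
  field_simp
  ring

end Aux

/-- For `r, n ≥ 1` and `0 ≤ k ≤ n`, reflection across the anti-diagonal is a bijection
from the `r`-FSchröder paths of size `n` with `k` diagonal steps onto the `r`-Schröder
paths of size `n` with `k` diagonal steps (`Sch r n (n-k)`); hence the two sets are
equinumerous and `|FSch r n k| = |Sch_{n,n-k}^r| = (1/((n-k)r+1)) C(n,n-k) C((n-k)r+n,n)`. -/
theorem fschroder_schroder_bijection (r n k : ℕ) (hr : 1 ≤ r) (hn : 1 ≤ n) (hk : k ≤ n) :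
    Set.BijOn (fun α => (α.map reflStep).reverse) (FSch r n k) (Sch r n (n - k)) ∧
    (FSch r n k).ncard = (Sch r n (n - k)).ncard ∧
    ((n - k) * r + 1) * (FSch r n k).ncard
      = Nat.choose n (n - k) * Nat.choose ((n - k) * r + n) n := by
  have hbij := Aux.refl_bijOn r n k hk
  have hcardeq : (FSch r n k).ncard = (Sch r n (n - k)).ncard := by
    have h1 : ((fun α => (α.map reflStep).reverse) '' (FSch r n k)).ncard
        = (FSch r n k).ncard := Set.ncard_image_of_injOn hbij.injOn
    rw [hbij.image_eq] at h1
    exact h1.symm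
  refine ⟨hbij, hcardeq, ?_⟩
  rw [hcardeq, mul_comm (n - k) r]
  -- now count the Schröder side
  have hSG : (Sch r n (n - k)).ncard = (Aux.Gd r (n - k) k).ncard := by
    have h1 := Set.ncard_image_of_injOn (Aux.bijOn_Sch_Gd r n k hr hk).injOn
    rw [(Aux.bijOn_Sch_Gd r n k hr hk).image_eq] at h1
    exact h1.symm
  have hGT := Aux.card_T_eq r (n - k) k
  have hTW := Aux.card_words ((n - k) + (r * (n - k) + 1) + k) (n - k) (r * (n - k) + 1) k rfl
  have key := Aux.key_arith r (n - k) k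
  have hnk : (n - k) + k = n := by omega
  rw [hnk] at key
  have hNpos : 0 < (n - k) + (r * (n - k) + 1) + k := by omega
  apply Nat.eq_of_mul_eq_mul_left hNpos
  calc ((n - k) + (r * (n - k) + 1) + k) * ((r * (n - k) + 1) * (Sch r n (n - k)).ncard)
      = (r * (n - k) + 1) * (((n - k) + (r * (n - k) + 1) + k) * (Aux.Gd r (n - k) k).ncard) := by
        rw [hSG]; ring
    _ = (r * (n - k) + 1) * (Aux.Wset (n - k) (r * (n - k) + 1) k).ncard := by rw [← hGT]
    _ = (r * (n - k) + 1) * (((n - k) + (r * (n - k) + 1) + k).choose (n - k)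
          * ((r * (n - k) + 1) + k).choose (r * (n - k) + 1)) := by rw [hTW]
    _ = ((n - k) + (r * (n - k) + 1) + k) * (n.choose (n - k) * (r * (n - k) + n).choose n) :=
        key
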